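/- Let H ∈ F_2^{σ×n} be a matrix in which every row has Hamming weight at most r and every column has Hamming weight at most c (r, c ≥ 1), and set z = (r−1)·c and p_z = 1/((1+z)·z·e^2). There exists a constant C depending only on z such that: for every probability distribution Pr on F_2^n that is locally stochastic with rate p, where 0 < p < 1/(z·e), and for every e ∈ F_2^n, the probability of its equivalence class Pr([e]_H) := Σ_{e' : H e' = H e} Pr(e') satisfies Pr([e]_H) ≤ C · (p/p_z)^{|e|^r_H}. -/

import Mathlib

/-!
Auxiliary machinery: cluster expansions for percolation-style counting of
"anchored" subsets in a bounded-degree adjacency structure, used to prove the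
probability bound for equivalence classes of errors under a locally stochastic
noise model.
-/


open Finset Relation

namespace PEC

open scoped Classical

variable {n : ℕ} {A : Fin n → Fin n → Prop} {S V W : Finset (Fin n)} {a b x x₀ : Fin n}
  {u γ : ℝ} {z : ℕ}

def rstep (A : Fin n → Fin n → Prop) (S : Finset (Fin n)) (a b : Fin n) : Prop :=
  a ∈ S ∧ b ∈ S ∧ A a b

def reach (A : Fin n → Fin n → Prop) (S : Finset (Fin n)) (a b : Fin n) : Prop :=
  Relation.ReflTransGen (rstep A S) a b

def anch (A : Fin n → Fin n → Prop) (W S : Finset (Fin n)) : Prop :=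
  ∀ a ∈ S, ∃ x ∈ W, x ∈ S ∧ reach A S a x

def isClu (A : Fin n → Fin n → Prop) (x : Fin n) (S : Finset (Fin n)) : Prop :=
  x ∈ S ∧ ∀ a ∈ S, reach A S x a

noncomputable def ancSum (A : Fin n → Fin n → Prop) (u : ℝ) (V W : Finset (Fin n)) : ℝ :=
  ∑ S ∈ V.powerset.filter (anch A W), u ^ S.card

noncomputable def cluSum (A : Fin n → Fin n → Prop) (u : ℝ) (V : Finset (Fin n)) (x : Fin n) : ℝ :=
  ∑ S ∈ V.powerset.filter (isClu A x), u ^ S.card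

lemma reach_symm (hA : ∀ a b, A a b → A b a) (h : reach A S a b) : reach A S b a := by
  induction h with
  | refl => exact .refl
  | tail _ h2 ih => exact Relation.ReflTransGen.head ⟨h2.2.1, h2.1, hA _ _ h2.2.2⟩ ih

lemma reach_right_mem (ha : a ∈ S) (h : reach A S a b) : b ∈ S := by
  induction h with
  | refl => exact ha
  | tail _ h2 _ => exact h2.2.1

lemma reach_filter_pred {P : Fin n → Prop} [DecidablePred P] (h : reach A S a b)
    (hP : ∀ v, reach A S v b → P v) :
    reach A (S.filter P) a b := by
  induction h using Relation.ReflTransGen.head_induction_on with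
  | refl => exact .refl
  | head hac h ih =>
    rename_i a' c'
    refine Relation.ReflTransGen.head ⟨?_, ?_, hac.2.2⟩ ih
    · simp only [mem_filter]
      exact ⟨hac.1, hP a' (Relation.ReflTransGen.head hac h)⟩
    · simp only [mem_filter]
      exact ⟨hac.2.1, hP c' h⟩

lemma reach_filter_self (h : reach A S a b) :
    reach A (S.filter (fun v => reach A S v b)) a b :=
  reach_filter_pred h fun _ hv => hv

lemma reach_out (h : reach A S a b) (ha : ¬ reach A S a x₀) :
    reach A (S.filter (fun v => ¬ reach A S v x₀)) a b ∧ ¬ reach A S b x₀ := by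
  induction h using Relation.ReflTransGen.head_induction_on with
  | refl => exact ⟨.refl, ha⟩
  | head hac h ih =>
    rename_i a' c'
    have hc : ¬ reach A S c' x₀ := fun hc => ha (Relation.ReflTransGen.head hac hc)
    obtain ⟨ih1, ih2⟩ := ih hc
    refine ⟨Relation.ReflTransGen.head ⟨?_, ?_, hac.2.2⟩ ih1, ih2⟩
    · simp only [mem_filter]; exact ⟨hac.1, ha⟩
    · simp only [mem_filter]; exact ⟨hac.2.1, hc⟩

lemma reach_erase (hA : ∀ a b, A a b → A b a) (h : reach A S a x) (hax : a ≠ x) :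
    ∃ y, A x y ∧ y ∈ S.erase x ∧ reach A (S.erase x) a y := by
  induction h using Relation.ReflTransGen.head_induction_on with
  | refl => exact absurd rfl hax
  | head hac h ih =>
    rename_i a' c'
    by_cases hc : c' = x
    · exact ⟨a', hA _ _ (hc ▸ hac.2.2), mem_erase.2 ⟨hax, hac.1⟩, .refl⟩
    · obtain ⟨y, h1, h2, h3⟩ := ih hc
      have ha' : a' ∈ S.erase x := mem_erase.2 ⟨hax, hac.1⟩
      have hc' : c' ∈ S.erase x := mem_erase.2 ⟨hc, hac.2.1⟩
      exact ⟨y, h1, h2, Relation.ReflTransGen.head ⟨ha', hc', hac.2.2⟩ h3⟩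

lemma ancSum_nonneg (hu : 0 ≤ u) : 0 ≤ ancSum A u V W :=
  Finset.sum_nonneg fun _ _ => pow_nonneg hu _

lemma cluSum_nonneg (hu : 0 ≤ u) : 0 ≤ cluSum A u V x :=
  Finset.sum_nonneg fun _ _ => pow_nonneg hu _

lemma ancSum_empty : ancSum A u V ∅ = 1 := by
  have : V.powerset.filter (anch A ∅) = {∅} := by
    ext T
    simp only [mem_filter, mem_powerset, mem_singleton]
    constructor
    · rintro ⟨-, hT⟩
      by_contra hne
      obtain ⟨a, ha⟩ := Finset.nonempty_iff_ne_empty.2 hne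
      obtain ⟨x, hx, -⟩ := hT a ha
      exact absurd hx (Finset.notMem_empty x)
    · rintro rfl
      exact ⟨Finset.empty_subset V, fun a ha => absurd ha (Finset.notMem_empty a)⟩
  rw [ancSum, this, Finset.sum_singleton, Finset.card_empty, pow_zero]

lemma ancSum_insert_le (hA : ∀ a b, A a b → A b a) (hu : 0 ≤ u) (hx₀ : x₀ ∉ W) :
    ancSum A u V (insert x₀ W) ≤ (1 + cluSum A u V x₀) * ancSum A u V W := by
  classical
  set 𝒜 := V.powerset.filter (anch A (insert x₀ W)) with h𝒜
  set 𝒦 := insert (∅ : Finset (Fin n)) (V.powerset.filter (isClu A x₀)) with h𝒦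
  set ℬ := V.powerset.filter (anch A W) with hℬ
  set Φ : Finset (Fin n) → Finset (Fin n) × Finset (Fin n) := fun S =>
    (S.filter (fun v => reach A S v x₀), S.filter (fun v => ¬ reach A S v x₀)) with hΦ
  have hsplit : ∀ S : Finset (Fin n), (Φ S).1 ∪ (Φ S).2 = S := fun S =>
    Finset.filter_union_filter_not_eq _ S
  have hcard : ∀ S : Finset (Fin n), (Φ S).1.card + (Φ S).2.card = S.card := fun S =>
    Finset.card_filter_add_card_filter_not (fun v => reach A S v x₀)
  have hmem : ∀ S ∈ 𝒜, Φ S ∈ 𝒦 ×ˢ ℬ := by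
    intro S hS
    rw [h𝒜, mem_filter, mem_powerset] at hS
    obtain ⟨hSV, hanch⟩ := hS
    rw [Finset.mem_product]
    constructor
    · rw [h𝒦, Finset.mem_insert]
      by_cases hK : (Φ S).1 = ∅
      · exact Or.inl hK
      · right
        obtain ⟨v, hv⟩ := Finset.nonempty_iff_ne_empty.2 hK
        rw [hΦ] at hv; simp only [mem_filter] at hv
        have hx₀S : x₀ ∈ S := by
          rcases Relation.reflTransGen_iff_eq_or_transGen.1 hv.2 with h | h
          · exact h ▸ hv.1
          · exact reach_right_mem hv.1 hv.2
        rw [mem_filter, mem_powerset]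
        refine ⟨(Finset.filter_subset _ _).trans hSV, ?_, ?_⟩
        · simp only [hΦ, mem_filter]
          exact ⟨hx₀S, Relation.ReflTransGen.refl⟩
        · intro a ha
          simp only [hΦ, mem_filter] at ha
          exact reach_symm hA (reach_filter_self (A := A) ha.2)
    · rw [hℬ, mem_filter, mem_powerset]
      refine ⟨(Finset.filter_subset _ _).trans hSV, ?_⟩
      intro a ha
      simp only [hΦ, mem_filter] at ha
      obtain ⟨haS, hnr⟩ := ha
      obtain ⟨x, hxW, hxS, hreach⟩ := hanch a haS
      have hxne : x ≠ x₀ := by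
        rintro rfl
        exact hnr hreach
      have hxW' : x ∈ W := by
        rcases Finset.mem_insert.1 hxW with h | h
        · exact absurd h hxne
        · exact h
      obtain ⟨hr, hnrx⟩ := reach_out hreach hnr
      exact ⟨x, hxW', by simp only [hΦ, mem_filter]; exact ⟨hxS, hnrx⟩, hr⟩
  have hinj : ∀ S₁ ∈ 𝒜, ∀ S₂ ∈ 𝒜, Φ S₁ = Φ S₂ → S₁ = S₂ := by
    intro S₁ _ S₂ _ h
    rw [← hsplit S₁, ← hsplit S₂, h]
  calc ancSum A u V (insert x₀ W)
      = ∑ S ∈ 𝒜, u ^ (Φ S).1.card * u ^ (Φ S).2.card := by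
        refine Finset.sum_congr rfl fun S _ => ?_
        rw [← pow_add, hcard S]
    _ = ∑ P ∈ 𝒜.image Φ, u ^ P.1.card * u ^ P.2.card :=
        (Finset.sum_image (f := fun P => u ^ P.1.card * u ^ P.2.card) hinj).symm
    _ ≤ ∑ P ∈ 𝒦 ×ˢ ℬ, u ^ P.1.card * u ^ P.2.card := by
        refine Finset.sum_le_sum_of_subset_of_nonneg ?_ ?_
        · intro P hP
          obtain ⟨S, hS, rfl⟩ := Finset.mem_image.1 hP
          exact hmem S hS
        · intro P _ _
          exact mul_nonneg (pow_nonneg hu _) (pow_nonneg hu _)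
    _ = (∑ K ∈ 𝒦, u ^ K.card) * ∑ T ∈ ℬ, u ^ T.card := by
        rw [Finset.sum_mul_sum, Finset.sum_product]
    _ = (1 + cluSum A u V x₀) * ancSum A u V W := by
        congr 1
        rw [h𝒦, Finset.sum_insert, Finset.card_empty, pow_zero, cluSum]
        intro hmem'
        rw [mem_filter] at hmem'
        exact absurd hmem'.2.1 (Finset.notMem_empty x₀)

lemma ancSum_le_prod (hA : ∀ a b, A a b → A b a) (hu : 0 ≤ u) (V W : Finset (Fin n)) :
    ancSum A u V W ≤ ∏ x ∈ W, (1 + cluSum A u V x) := by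
  induction W using Finset.induction_on with
  | empty => rw [ancSum_empty, Finset.prod_empty]
  | insert _ _ hx₀ =>
    rename_i x₀ W ih
    rw [Finset.prod_insert hx₀]
    refine (ancSum_insert_le hA hu hx₀).trans ?_
    refine mul_le_mul_of_nonneg_left ih ?_
    exact add_nonneg zero_le_one (cluSum_nonneg hu)

lemma cluSum_le (hA : ∀ a b, A a b → A b a) (hu : 0 ≤ u) (hγ : 0 ≤ γ)
    (hdeg : ∀ y : Fin n, ∃ T : Finset (Fin n), (∀ v, A y v → v ∈ T) ∧ T.card ≤ z)
    (hkey : u * (1 + γ) ^ z ≤ γ) :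
    ∀ (V : Finset (Fin n)) (x : Fin n), cluSum A u V x ≤ γ := by
  intro V
  induction V using Finset.strongInduction with
  | _ V ih =>
    intro x
    by_cases hx : x ∈ V
    · obtain ⟨N, hN1, hN2⟩ := hdeg x
      have key : cluSum A u V x ≤ u * ancSum A u (V.erase x) N := by
        set 𝒞 := V.powerset.filter (isClu A x) with h𝒞
        have hmem : ∀ S ∈ 𝒞, S.erase x ∈ (V.erase x).powerset.filter (anch A N) := by
          intro S hS
          rw [h𝒞, mem_filter, mem_powerset] at hS
          obtain ⟨hSV, hxS, hclu⟩ := hS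
          rw [mem_filter, mem_powerset]
          refine ⟨Finset.erase_subset_erase _ hSV, ?_⟩
          intro a ha
          have haS : a ∈ S := Finset.mem_of_mem_erase ha
          have hax : a ≠ x := Finset.ne_of_mem_erase ha
          obtain ⟨y, h1, h2, h3⟩ := reach_erase hA (reach_symm hA (hclu a haS)) hax
          exact ⟨y, hN1 y h1, h2, h3⟩
        have hinj : ∀ S₁ ∈ 𝒞, ∀ S₂ ∈ 𝒞, S₁.erase x = S₂.erase x → S₁ = S₂ := by
          intro S₁ hS₁ S₂ hS₂ h
          rw [h𝒞, mem_filter] at hS₁ hS₂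
          rw [← Finset.insert_erase hS₁.2.1, h, Finset.insert_erase hS₂.2.1]
        calc cluSum A u V x = ∑ S ∈ 𝒞, u * u ^ (S.erase x).card := by
              refine Finset.sum_congr rfl fun S hS => ?_
              rw [h𝒞, mem_filter] at hS
              rw [← Finset.card_erase_add_one hS.2.1, pow_succ, mul_comm]
          _ = ∑ T ∈ 𝒞.image (fun S => S.erase x), u * u ^ T.card :=
              (Finset.sum_image (f := fun T => u * u ^ T.card) hinj).symm
          _ ≤ ∑ T ∈ (V.erase x).powerset.filter (anch A N), u * u ^ T.card := by
              refine Finset.sum_le_sum_of_subset_of_nonneg ?_ ?_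
              · intro T hT
                obtain ⟨S, hS, rfl⟩ := Finset.mem_image.1 hT
                exact hmem S hS
              · intro T _ _
                exact mul_nonneg hu (pow_nonneg hu _)
          _ = u * ancSum A u (V.erase x) N := by rw [ancSum, Finset.mul_sum]
      refine key.trans ?_
      have h2 : ancSum A u (V.erase x) N ≤ (1 + γ) ^ N.card := by
        refine (ancSum_le_prod hA hu _ _).trans ?_
        refine (Finset.prod_le_prod (fun y _ => ?_) (fun y _ => ?_)).trans_eq
          (Finset.prod_const _)
        · exact add_nonneg zero_le_one (cluSum_nonneg hu)
        · exact add_le_add_right (ih (V.erase x) (Finset.erase_ssubset hx) y) 1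
      have h3 : (1 + γ) ^ N.card ≤ (1 + γ) ^ z :=
        pow_le_pow_right₀ (by linarith) hN2
      calc u * ancSum A u (V.erase x) N ≤ u * (1 + γ) ^ z :=
            mul_le_mul_of_nonneg_left (h2.trans h3) hu
        _ ≤ γ := hkey
    · have : V.powerset.filter (isClu A x) = ∅ := by
        rw [Finset.filter_eq_empty_iff]
        intro S hS
        rw [mem_powerset] at hS
        exact fun h => hx (hS h.1)
      rw [cluSum, this, Finset.sum_empty]
      exact hγ

lemma ancSum_le_pow (hA : ∀ a b, A a b → A b a) (hu : 0 ≤ u) (hγ : 0 ≤ γ)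
    (hdeg : ∀ y : Fin n, ∃ T : Finset (Fin n), (∀ v, A y v → v ∈ T) ∧ T.card ≤ z)
    (hkey : u * (1 + γ) ^ z ≤ γ) (V W : Finset (Fin n)) :
    ancSum A u V W ≤ (1 + γ) ^ W.card := by
  refine (ancSum_le_prod hA hu V W).trans ?_
  exact (Finset.prod_le_prod (fun y _ => add_nonneg zero_le_one (cluSum_nonneg hu))
    (fun y _ => add_le_add_right (cluSum_le hA hu hγ hdeg hkey V y) 1)).trans_eq
    (Finset.prod_const _)

end PEC

set_option maxHeartbeats 2000000 in
open PEC in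
/-- **Probability of equivalent error classes (Lemma: prob_equivalent_classes).**
Let `H ∈ F₂^{σ×n}` be an `(r,c)`-LDPC matrix (row weights `≤ r`, column weights `≤ c`,
`r, c ≥ 1`), set `z = (r-1)·c` and `p_z = 1/((1+z)·z·e²)`.  There is a constant `C`
depending only on `z` such that for every locally stochastic distribution `Pr` with rate
`p`, `0 < p < 1/(z·e)`, and every `e ∈ F₂ⁿ`,
`Pr([e]_H) ≤ C · (p/p_z)^{|e|ʳ_H}` where `|e|ʳ_H` is the reduced weight of `e` w.r.t. `H`. -/
theorem stmt_2 (z : ℕ) :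
    ∃ C : ℝ, ∀ (σ n r c : ℕ), 1 ≤ r → 1 ≤ c → (r - 1) * c = z →
      ∀ H : Matrix (Fin σ) (Fin n) (ZMod 2),
        (∀ i, hammingNorm (H i) ≤ r) →
        (∀ j, hammingNorm (fun i => H i j) ≤ c) →
        ∀ (p : ℝ) (Pr : (Fin n → ZMod 2) → ℝ),
          0 < p → p < 1 / ((z : ℝ) * Real.exp 1) →
          (∀ e, 0 ≤ Pr e) → (∑ e, Pr e) = 1 →
          (∀ e : Fin n → ZMod 2,
            (∑ e' ∈ Finset.univ.filter fun e' => ∀ i, e i ≠ 0 → e' i ≠ 0, Pr e')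
              ≤ p ^ hammingNorm e) →
          ∀ e : Fin n → ZMod 2,
            (∑ e' ∈ Finset.univ.filter fun e' => H.mulVec e' = H.mulVec e, Pr e')
              ≤ C * (p / (1 / ((1 + (z : ℝ)) * (z : ℝ) * Real.exp 1 ^ 2))) ^
                  sInf {w | ∃ e' : Fin n → ZMod 2,
                    H.mulVec e' = H.mulVec e ∧ hammingNorm e' = w} := by
  classical
  refine ⟨1, ?_⟩
  intro σ n r c hr hc hrc H hrow hcol p Pr hp hpu' hPr hsum hloc e
  rcases Nat.eq_zero_or_pos z with hz0 | hzpos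
  · exfalso
    rw [hz0] at hpu'
    norm_num at hpu'
    linarith
  have hzR : (1 : ℝ) ≤ (z : ℝ) := by exact_mod_cast hzpos
  have hzne : (z : ℝ) ≠ 0 := by positivity
  have hexp_pos : (0 : ℝ) < Real.exp 1 := Real.exp_pos 1
  have hexp1 : (1 : ℝ) < Real.exp 1 := by
    have := Real.add_one_le_exp (1 : ℝ); linarith
  set u : ℝ := 1 / ((z : ℝ) * Real.exp 1) with hu_def
  set γ : ℝ := 1 / (z : ℝ) with hγ_def
  have hu_pos : 0 < u := by positivity
  have hu1 : u ≤ 1 := by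
    rw [hu_def, div_le_one (by positivity)]
    nlinarith
  have hpu : p ≤ u := le_of_lt hpu'
  have hp1 : p ≤ 1 := hpu.trans hu1
  have hγ_pos : 0 < γ := by positivity
  have hkey : u * (1 + γ) ^ z ≤ γ := by
    have h1 : (1 : ℝ) + 1 / (z : ℝ) ≤ Real.exp (1 / (z : ℝ)) := by
      have := Real.add_one_le_exp (1 / (z : ℝ)); linarith
    have h2 : ((1 : ℝ) + 1 / (z : ℝ)) ^ z ≤ Real.exp (1 / (z : ℝ)) ^ z :=
      pow_le_pow_left₀ (by positivity) h1 z
    have h3 : Real.exp (1 / (z : ℝ)) ^ z = Real.exp 1 := by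
      rw [← Real.exp_nat_mul]
      congr 1
      field_simp
    have h4 : ((1 : ℝ) + γ) ^ z ≤ Real.exp 1 := by
      rw [hγ_def]; rw [h3] at h2; exact h2
    calc u * (1 + γ) ^ z ≤ u * Real.exp 1 :=
          mul_le_mul_of_nonneg_left h4 hu_pos.le
      _ = γ := by rw [hu_def, hγ_def]; field_simp
  set cls : Set ℕ :=
    {w | ∃ e' : Fin n → ZMod 2, H.mulVec e' = H.mulVec e ∧ hammingNorm e' = w} with hcls
  have hcls_ne : cls.Nonempty := ⟨hammingNorm e, e, rfl, rfl⟩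
  set w₀ : ℕ := sInf cls with hw₀
  obtain ⟨estar, hestar_cls, hestar_w⟩ : ∃ e', H.mulVec e' = H.mulVec e ∧ hammingNorm e' = w₀ :=
    Nat.sInf_mem hcls_ne
  have hmin : ∀ e' : Fin n → ZMod 2, H.mulVec e' = H.mulVec e → w₀ ≤ hammingNorm e' :=
    fun e' h => Nat.sInf_le ⟨e', h, rfl⟩
  set A : Fin n → Fin n → Prop :=
    fun j j' => j ≠ j' ∧ ∃ i, H i j ≠ 0 ∧ H i j' ≠ 0 with hA_def
  have hA_symm : ∀ a b, A a b → A b a := by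
    rintro a b ⟨hne, i, h1, h2⟩
    exact ⟨hne.symm, i, h2, h1⟩
  have hdeg : ∀ y : Fin n, ((univ.filter (fun v => A y v)).card ≤ z) := by
    intro y
    have hsub : univ.filter (fun v => A y v) ⊆
        (univ.filter (fun i : Fin σ => H i y ≠ 0)).biUnion
          (fun i => (univ.filter (fun j : Fin n => H i j ≠ 0)).erase y) := by
      intro v hv
      simp only [mem_filter, mem_univ, true_and] at hv
      obtain ⟨hne, i, h1, h2⟩ := hv
      simp only [mem_biUnion, mem_filter, mem_univ, true_and, mem_erase]
      exact ⟨i, h1, hne.symm, h2⟩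
    calc (univ.filter (fun v => A y v)).card
        ≤ _ := Finset.card_le_card hsub
      _ ≤ ∑ i ∈ univ.filter (fun i : Fin σ => H i y ≠ 0),
            ((univ.filter (fun j : Fin n => H i j ≠ 0)).erase y).card :=
          Finset.card_biUnion_le
      _ ≤ ∑ _i ∈ univ.filter (fun i : Fin σ => H i y ≠ 0), (r - 1) := by
          refine Finset.sum_le_sum fun i hi => ?_
          simp only [mem_filter, mem_univ, true_and] at hi
          have hymem : y ∈ univ.filter (fun j : Fin n => H i j ≠ 0) := by
            simp [hi]
          rw [Finset.card_erase_of_mem hymem]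
          have := hrow i
          rw [hammingNorm] at this
          omega
      _ ≤ c * (r - 1) := by
          rw [Finset.sum_const, smul_eq_mul]
          have hcard : (univ.filter (fun i : Fin σ => H i y ≠ 0)).card ≤ c := by
            have := hcol y
            rw [hammingNorm] at this
            exact this
          exact Nat.mul_le_mul_right _ hcard
      _ = z := by rw [← hrc]; ring
  set supp : (Fin n → ZMod 2) → Finset (Fin n) :=
    fun v => univ.filter (fun j => v j ≠ 0) with hsupp_def
  have hnorm_supp : ∀ v : Fin n → ZMod 2, hammingNorm v = (supp v).card := by
    intro v; rw [hammingNorm]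
  have hsupp_mem : ∀ (v : Fin n → ZMod 2) j, j ∈ supp v ↔ v j ≠ 0 := by
    intro v j; simp [hsupp_def]
  set W : Finset (Fin n) := supp estar with hW_def
  have hWcard : W.card = w₀ := by rw [hW_def, ← hnorm_supp, hestar_w]
  have z2 : ∀ x y : ZMod 2, x + (y + x) = y := by decide
  have z2'' : ∀ x : ZMod 2, x + x = 0 := by decide
  have z2one : ∀ x : ZMod 2, x ≠ 0 → x = 1 := by decide
  set fv : (Fin n → ZMod 2) → (Fin n → ZMod 2) := fun e' => e' + estar with hfv_def
  set anchCond : (Fin n → ZMod 2) → Fin n → Prop :=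
    fun e' j => ∃ x, estar x ≠ 0 ∧ reach A (supp (fv e')) j x with hanchCond_def
  set F : (Fin n → ZMod 2) → (Fin n → ZMod 2) :=
    fun e' j => estar j + (if anchCond e' j then fv e' j else 0) with hF_def
  set fB : (Fin n → ZMod 2) → (Fin n → ZMod 2) :=
    fun e' j => if anchCond e' j then 0 else fv e' j with hfB_def
  have hfv_apply : ∀ e' j, fv e' j = e' j + estar j := fun e' j => rfl
  have hF_apply : ∀ e' j, F e' j = estar j + (if anchCond e' j then fv e' j else 0) :=
    fun e' j => rfl
  have hfB_apply : ∀ e' j, fB e' j = if anchCond e' j then 0 else fv e' j :=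
    fun e' j => rfl
  have hdecomp : ∀ e' j, e' j = F e' j + fB e' j := by
    intro e' j
    rw [hF_apply, hfB_apply]
    by_cases hc : anchCond e' j
    · rw [if_pos hc, if_pos hc, add_zero, hfv_apply]
      exact (z2 (estar j) (e' j)).symm
    · rw [if_neg hc, if_neg hc, add_zero, hfv_apply]
      exact (z2 (estar j) (e' j)).symm
  have hdecomp' : ∀ e', F e' = e' + fB e' := by
    intro e'
    funext j
    rw [Pi.add_apply, hdecomp e' j, add_assoc, z2'' (fB e' j), add_zero]
  -- L1 : F e' lies in the class
  have hL1 : ∀ e', H.mulVec e' = H.mulVec e → H.mulVec (F e') = H.mulVec e := by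
    intro e' hE
    have hf0 : H.mulVec (fv e') = 0 := by
      rw [hfv_def, Matrix.mulVec_add, hE, hestar_cls]
      funext i
      rw [Pi.add_apply, z2'']
      rfl
    have hfB0 : H.mulVec (fB e') = 0 := by
      funext i
      show (H.mulVec (fB e')) i = (0 : Fin σ → ZMod 2) i
      have hzero : (0 : Fin σ → ZMod 2) i = 0 := rfl
      rw [hzero]
      by_cases hcase : ∀ j, H i j ≠ 0 → fv e' j ≠ 0 → anchCond e' j
      · rw [Matrix.mulVec, dotProduct]
        refine Finset.sum_eq_zero fun j _ => ?_
        by_cases h1 : H i j = 0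
        · rw [h1, zero_mul]
        by_cases h2 : fv e' j = 0
        · rw [hfB_apply]
          by_cases hc : anchCond e' j
          · rw [if_pos hc, mul_zero]
          · rw [if_neg hc, h2, mul_zero]
        · rw [hfB_apply, if_pos (hcase j h1 h2), mul_zero]
      · push_neg at hcase
        obtain ⟨j0, hj0H, hj0f, hj0na⟩ := hcase
        have heq : (H.mulVec (fB e')) i = (H.mulVec (fv e')) i := by
          rw [Matrix.mulVec, Matrix.mulVec, dotProduct, dotProduct]
          refine Finset.sum_congr rfl fun j _ => ?_
          by_cases h1 : H i j = 0
          · rw [h1, zero_mul, zero_mul]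
          by_cases h2 : fv e' j = 0
          · rw [h2, mul_zero, hfB_apply]
            by_cases hc : anchCond e' j
            · rw [if_pos hc, mul_zero]
            · rw [if_neg hc, h2, mul_zero]
          · have hna : ¬ anchCond e' j := by
              intro hanchj
              obtain ⟨x, hx, hr⟩ := hanchj
              by_cases hjj : j0 = j
              · exact hj0na (hjj ▸ ⟨x, hx, hr⟩)
              · refine hj0na ⟨x, hx, Relation.ReflTransGen.head ?_ hr⟩
                refine ⟨?_, ?_, hjj, i, hj0H, h1⟩
                · exact (hsupp_mem _ _).2 hj0f
                · exact (hsupp_mem _ _).2 h2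
            rw [hfB_apply, if_neg hna]
        rw [heq, hf0]
        rfl
    rw [hdecomp' e', Matrix.mulVec_add, hE, hfB0, add_zero]
  -- L2 : support of F e' is contained in supp e'
  have hL2 : ∀ e' i, F e' i ≠ 0 → e' i ≠ 0 := by
    intro e' i hFi
    have hanch : anchCond e' i := by
      by_contra hna
      have hFe : F e' i = estar i := by rw [hF_apply, if_neg hna, add_zero]
      rw [hFe] at hFi
      exact hna ⟨i, hFi, Relation.ReflTransGen.refl⟩
    have hfBi : fB e' i = 0 := by rw [hfB_apply, if_pos hanch]
    have key : e' i = F e' i := by rw [hdecomp e' i, hfBi, add_zero]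
    intro h0
    apply hFi
    rw [key] at h0
    exact h0
  -- L3 : supp (fv (F e')) is anchored on W
  have hFA : ∀ e' j, fv (F e') j = (if anchCond e' j then fv e' j else 0) := by
    intro e' j
    rw [hfv_apply, hF_apply, add_comm (estar j), add_assoc, z2'' (estar j), add_zero]
  have hsuppFA : ∀ e', supp (fv (F e')) = (supp (fv e')).filter (anchCond e') := by
    intro e'
    ext j
    rw [hsupp_mem, mem_filter, hsupp_mem, hFA e' j]
    by_cases hc : anchCond e' j
    · rw [if_pos hc]; exact ⟨fun h => ⟨h, hc⟩, fun h => h.1⟩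
    · rw [if_neg hc]
      exact ⟨fun h => absurd rfl h, fun h => absurd h.2 hc⟩
  have hL3 : ∀ e', anch A W (supp (fv (F e'))) := by
    intro e'
    rw [hsuppFA e']
    intro j hj
    rw [mem_filter] at hj
    obtain ⟨hjS, x, hx, hreach⟩ := hj
    have hxS : x ∈ supp (fv e') := PEC.reach_right_mem hjS hreach
    have hanchx : anchCond e' x := ⟨x, hx, Relation.ReflTransGen.refl⟩
    refine ⟨x, ?_, ?_, ?_⟩
    · rw [hW_def]; exact (hsupp_mem _ _).2 hx
    · rw [mem_filter]; exact ⟨hxS, hanchx⟩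
    · have mk : ∀ v, PEC.reach A (supp (fv e')) v x → anchCond e' v :=
        fun v hv => ⟨x, hx, hv⟩
      exact PEC.reach_filter_pred hreach mk
  -- support determines the vector
  have hsupp_inj : ∀ v v' : Fin n → ZMod 2, supp v = supp v' → v = v' := by
    intro v v' h
    funext j
    by_cases hj : v j = 0
    · have hj' : v' j = 0 := by
        by_contra hne
        have h2 : j ∈ supp v' := (hsupp_mem _ _).2 hne
        rw [← h] at h2
        exact ((hsupp_mem _ _).1 h2) hj
      rw [hj, hj']
    · have hj' : v' j ≠ 0 := by
        have h2 : j ∈ supp v := (hsupp_mem _ _).2 hj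
        rw [h] at h2
        exact (hsupp_mem _ _).1 h2
      rw [z2one _ hj, z2one _ hj']
  -- pointwise numeric bound
  have hpoint : ∀ t s : ℕ, w₀ ≤ t → s ≤ t + w₀ →
      p ^ t ≤ (p ^ w₀ / u ^ (2 * w₀)) * u ^ s := by
    intro t s h1 h2
    rw [div_mul_eq_mul_div, le_div_iff₀ (pow_pos hu_pos _)]
    rcases le_total s (2 * w₀) with hs | hs
    · have a1 : p ^ t ≤ p ^ w₀ := pow_le_pow_of_le_one hp.le hp1 h1
      have a2 : u ^ (2 * w₀) ≤ u ^ s := pow_le_pow_of_le_one hu_pos.le hu1 hs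
      exact mul_le_mul a1 a2 (pow_nonneg hu_pos.le _) (pow_nonneg hp.le _)
    · have a1 : p ^ t ≤ p ^ (s - w₀) := pow_le_pow_of_le_one hp.le hp1 (by omega)
      have a2 : p ^ (s - w₀) = p ^ w₀ * p ^ (s - 2 * w₀) := by
        rw [← pow_add]; congr 1; omega
      have a3 : p ^ (s - 2 * w₀) ≤ u ^ (s - 2 * w₀) := pow_le_pow_left₀ hp.le hpu _
      have a4 : u ^ s = u ^ (s - 2 * w₀) * u ^ (2 * w₀) := by
        rw [← pow_add]; congr 1; omega
      calc p ^ t * u ^ (2 * w₀) ≤ p ^ (s - w₀) * u ^ (2 * w₀) :=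
            mul_le_mul_of_nonneg_right a1 (pow_nonneg hu_pos.le _)
        _ = p ^ w₀ * p ^ (s - 2 * w₀) * u ^ (2 * w₀) := by rw [a2]
        _ ≤ p ^ w₀ * u ^ (s - 2 * w₀) * u ^ (2 * w₀) :=
            mul_le_mul_of_nonneg_right
              (mul_le_mul_of_nonneg_left a3 (pow_nonneg hp.le _))
              (pow_nonneg hu_pos.le _)
        _ = p ^ w₀ * u ^ s := by rw [a4, mul_assoc]
  have hdeg2 : ∀ y : Fin n, ∃ T : Finset (Fin n), (∀ v, A y v → v ∈ T) ∧ T.card ≤ z :=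
    fun y => ⟨univ.filter (fun v => A y v), fun v hv => mem_filter.2 ⟨mem_univ v, hv⟩, hdeg y⟩
  -- main chain
  set 𝒞 : Finset (Fin n → ZMod 2) :=
    univ.filter (fun e' => H.mulVec e' = H.mulVec e) with h𝒞
  set SS : Finset (Finset (Fin n)) := (𝒞.image F).image (fun a => supp (fv a)) with hSS
  have hCmem : ∀ e' ∈ 𝒞, H.mulVec e' = H.mulVec e := by
    intro e' h
    rw [h𝒞, mem_filter] at h
    exact h.2
  calc ∑ e' ∈ 𝒞, Pr e'
      = ∑ a ∈ 𝒞.image F, ∑ e' ∈ 𝒞.filter (fun e' => F e' = a), Pr e' :=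
        (Finset.sum_fiberwise_of_maps_to (fun e' h => Finset.mem_image_of_mem F h) Pr).symm
    _ ≤ ∑ a ∈ 𝒞.image F, p ^ hammingNorm a := by
        refine Finset.sum_le_sum fun a _ => ?_
        refine le_trans (Finset.sum_le_sum_of_subset_of_nonneg ?_
          (fun i _ _ => hPr i)) (hloc a)
        intro e' he'
        rw [mem_filter] at he'
        rw [mem_filter]
        refine ⟨mem_univ _, fun i hi => ?_⟩
        rw [← he'.2] at hi
        exact hL2 e' i hi
    _ ≤ ∑ a ∈ 𝒞.image F, (p ^ w₀ / u ^ (2 * w₀)) * u ^ (supp (fv a)).card := by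
        refine Finset.sum_le_sum fun a ha => ?_
        obtain ⟨e', he'C, rfl⟩ := Finset.mem_image.1 ha
        have haC : H.mulVec (F e') = H.mulVec e := hL1 e' (hCmem e' he'C)
        have h1 : w₀ ≤ hammingNorm (F e') := hmin _ haC
        have h2 : (supp (fv (F e'))).card ≤ hammingNorm (F e') + w₀ := by
          have hsub : supp (fv (F e')) ⊆ supp (F e') ∪ supp estar := by
            intro j hj
            have hj2 := (hsupp_mem _ _).1 hj
            rw [Finset.mem_union]
            rcases eq_or_ne (F e' j) 0 with h | h
            · right
              refine (hsupp_mem _ _).2 ?_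
              intro h0
              apply hj2
              rw [hfv_apply, h, h0, add_zero]
            · left
              exact (hsupp_mem _ _).2 h
          calc (supp (fv (F e'))).card ≤ (supp (F e') ∪ supp estar).card :=
                Finset.card_le_card hsub
            _ ≤ (supp (F e')).card + (supp estar).card := Finset.card_union_le _ _
            _ = hammingNorm (F e') + w₀ := by
                rw [← hnorm_supp, ← hnorm_supp, hestar_w]
        exact hpoint _ _ h1 h2
    _ = ∑ S ∈ SS, (p ^ w₀ / u ^ (2 * w₀)) * u ^ S.card := by
        rw [hSS]
        refine (Finset.sum_image (f := fun S : Finset (Fin n) => (p ^ w₀ / u ^ (2 * w₀)) * u ^ S.card) ?_).symm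
        intro a₁ _ a₂ _ h
        have := hsupp_inj _ _ h
        rw [hfv_def] at this
        exact add_right_cancel this
    _ ≤ ∑ S ∈ univ.powerset.filter (anch A W),
          (p ^ w₀ / u ^ (2 * w₀)) * u ^ S.card := by
        refine Finset.sum_le_sum_of_subset_of_nonneg ?_ (fun S _ _ => ?_)
        · intro S hS
          obtain ⟨a, ha, rfl⟩ := Finset.mem_image.1 hS
          obtain ⟨e', _, rfl⟩ := Finset.mem_image.1 ha
          rw [mem_filter, mem_powerset]
          exact ⟨Finset.subset_univ _, hL3 e'⟩
        · positivity
    _ = (p ^ w₀ / u ^ (2 * w₀)) * ancSum A u univ W := by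
        rw [ancSum, Finset.mul_sum]
    _ ≤ (p ^ w₀ / u ^ (2 * w₀)) * (1 + γ) ^ w₀ := by
        have := PEC.ancSum_le_pow hA_symm hu_pos.le hγ_pos.le hdeg2 hkey univ W
        rw [hWcard] at this
        exact mul_le_mul_of_nonneg_left this (by positivity)
    _ = 1 * (p / (1 / ((1 + (z : ℝ)) * (z : ℝ) * Real.exp 1 ^ 2))) ^ w₀ := by
        rw [one_mul, div_div_eq_mul_div, div_one]
        have h2w : u ^ (2 * w₀) = (u ^ 2) ^ w₀ := by rw [← pow_mul]
        rw [h2w, ← div_pow, ← mul_pow]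
        congr 1
        obtain ⟨E, hE, hEeq⟩ : ∃ E : ℝ, 0 < E ∧ Real.exp 1 = E := ⟨_, hexp_pos, rfl⟩
        have hEne : E ≠ 0 := ne_of_gt hE
        rw [hu_def, hγ_def, hEeq]
        field_simp
        ring
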